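/- Let B be a category with an initial object b, and let p : E ⥤ B be a Grothendieck opfibration. Then evaluation at b induces an equivalence of categories between the category of cocartesian sections of p (sections σ : B ⥤ E of p such that σ sends every morphism of B to a p-cocartesian morphism, with morphisms the vertical natural transformations) and the fiber category of p over b. -/

import Mathlib

open CategoryTheory

universe v₁ v₂ u₁ u₂

variable {E : Type u₁} {B : Type u₂} [Category.{v₁} E] [Category.{v₂} B]

/-- `φ : x ⟶ y` is `p`-cocartesian over `f : p.obj x ⟶ p.obj y`: it lies over `f`, and any
morphism out of `x` lying over `f ≫ g` factors uniquely through `φ` by a morphism over `g`. -/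
def IsCocartesian (p : E ⥤ B) {x y : E} (f : p.obj x ⟶ p.obj y) (φ : x ⟶ y) : Prop :=
  p.map φ = f ∧ ∀ {z : E} (g : p.obj y ⟶ p.obj z) (χ : x ⟶ z),
    p.map χ = f ≫ g → ∃! ψ : y ⟶ z, p.map ψ = g ∧ χ = φ ≫ ψ

/-- `p` is a Grothendieck opfibration: every morphism out of the image of an object admits a
cocartesian lift. -/
def IsOpfibration (p : E ⥤ B) : Prop :=
  ∀ (x : E) (b : B) (u : p.obj x ⟶ b), ∃ (y : E) (e : p.obj y = b) (φ : x ⟶ y),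
    IsCocartesian p (u ≫ eqToHom e.symm) φ

/-- The fiber of `p` over `b`: objects of `E` lying over `b` with vertical morphisms. -/
def Fib (p : E ⥤ B) (b : B) := {e : E // p.obj e = b}

instance fibCategory (p : E ⥤ B) (b : B) : Category (Fib p b) where
  Hom x y := {f : x.1 ⟶ y.1 // p.map f = eqToHom (x.2.trans y.2.symm)}
  id x := ⟨𝟙 x.1, by simp⟩
  comp f g := ⟨f.1 ≫ g.1, by simp [f.2, g.2]⟩
  id_comp f := by apply Subtype.ext; simp
  comp_id f := by apply Subtype.ext; simp
  assoc f g h := by apply Subtype.ext; simp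

/-- A cocartesian section of `p`: a (strict) section sending every morphism of `B` to a
`p`-cocartesian morphism. -/
structure CocartSection (p : E ⥤ B) where
  σ : B ⥤ E
  sec : σ ⋙ p = 𝟭 B
  cocart : ∀ {x y : B} (u : x ⟶ y),
    IsCocartesian p
      (eqToHom (Functor.congr_obj sec x) ≫ u ≫ eqToHom (Functor.congr_obj sec y).symm)
      (σ.map u)

instance cocartSectionCategory (p : E ⥤ B) : Category (CocartSection p) where
  Hom S T := {η : S.σ ⟶ T.σ // ∀ x : B, p.map (η.app x) =
    eqToHom ((Functor.congr_obj S.sec x).trans (Functor.congr_obj T.sec x).symm)}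
  id S := ⟨𝟙 S.σ, by intro x; simp⟩
  comp f g := ⟨f.1 ≫ g.1, by intro x; simp [f.2, g.2]⟩
  id_comp f := by apply Subtype.ext; simp
  comp_id f := by apply Subtype.ext; simp
  assoc f g h := by apply Subtype.ext; simp

/-- Evaluation of cocartesian sections at `b`. -/
def evalAt (p : E ⥤ B) (b : B) : CocartSection p ⥤ Fib p b where
  obj S := ⟨S.σ.obj b, Functor.congr_obj S.sec b⟩
  map {S T} η := ⟨η.1.app b, η.2 b⟩
  map_id S := by apply Subtype.ext; simp; rfl
  map_comp f g := by apply Subtype.ext; simp; rfl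

-- AUX START

lemma cocart_hom_ext {p : E ⥤ B} {x y z : E} {f : p.obj x ⟶ p.obj y} {φ : x ⟶ y}
    (h : IsCocartesian p f φ) {ψ₁ ψ₂ : y ⟶ z} (hmap : p.map ψ₁ = p.map ψ₂)
    (hcomp : φ ≫ ψ₁ = φ ≫ ψ₂) : ψ₁ = ψ₂ := by
  obtain ⟨u, -, hu⟩ := h.2 (p.map ψ₁) (φ ≫ ψ₁) (by rw [p.map_comp, h.1])
  exact (hu ψ₁ ⟨rfl, rfl⟩).trans (hu ψ₂ ⟨hmap.symm, hcomp⟩).symm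

lemma cocart_cancel {p : E ⥤ B} {x y z : E} {f : p.obj x ⟶ p.obj y} {g : p.obj y ⟶ p.obj z}
    {φ : x ⟶ y} {ψ : y ⟶ z} (hφ : IsCocartesian p f φ)
    (hc : IsCocartesian p (f ≫ g) (φ ≫ ψ)) (hψ : p.map ψ = g) :
    IsCocartesian p g ψ := by
  refine ⟨hψ, fun {z'} h χ hχ => ?_⟩
  obtain ⟨θ, ⟨hθ₁, hθ₂⟩, hθu⟩ := hc.2 h (φ ≫ χ)
    (by rw [p.map_comp, hφ.1, hχ, Category.assoc])
  refine ⟨θ, ⟨hθ₁, ?_⟩, fun θ' hθ' => hθu θ' ⟨hθ'.1, by rw [Category.assoc, ← hθ'.2]⟩⟩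
  exact cocart_hom_ext hφ (by rw [p.map_comp, hψ, hθ₁, hχ])
    (by rw [hθ₂, Category.assoc])

section SecConstruction

variable (p : E ⥤ B) (hp : IsOpfibration p) {b : B} (hb : Limits.IsInitial b) (e : Fib p b)

noncomputable def secObj (x : B) : E := (hp e.1 x (eqToHom e.2 ≫ hb.to x)).choose

lemma secObj_over (x : B) : p.obj (secObj p hp hb e x) = x :=
  (hp e.1 x (eqToHom e.2 ≫ hb.to x)).choose_spec.choose

noncomputable def secLift (x : B) : e.1 ⟶ secObj p hp hb e x :=
  (hp e.1 x (eqToHom e.2 ≫ hb.to x)).choose_spec.choose_spec.choose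

lemma secLift_cocart (x : B) :
    IsCocartesian p ((eqToHom e.2 ≫ hb.to x) ≫ eqToHom (secObj_over p hp hb e x).symm)
      (secLift p hp hb e x) :=
  (hp e.1 x (eqToHom e.2 ≫ hb.to x)).choose_spec.choose_spec.choose_spec

lemma secMap_exists {x y : B} (u : x ⟶ y) :
    ∃! ψ : secObj p hp hb e x ⟶ secObj p hp hb e y,
      p.map ψ = eqToHom (secObj_over p hp hb e x) ≫ u ≫ eqToHom (secObj_over p hp hb e y).symm ∧
      secLift p hp hb e y = secLift p hp hb e x ≫ ψ := by
  refine (secLift_cocart p hp hb e x).2 _ (secLift p hp hb e y) ?_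
  rw [(secLift_cocart p hp hb e y).1, hb.hom_ext (hb.to y) (hb.to x ≫ u)]
  simp

noncomputable def secMap {x y : B} (u : x ⟶ y) : secObj p hp hb e x ⟶ secObj p hp hb e y :=
  (secMap_exists p hp hb e u).exists.choose

lemma secMap_over {x y : B} (u : x ⟶ y) :
    p.map (secMap p hp hb e u) =
      eqToHom (secObj_over p hp hb e x) ≫ u ≫ eqToHom (secObj_over p hp hb e y).symm :=
  (secMap_exists p hp hb e u).exists.choose_spec.1

lemma secMap_fac {x y : B} (u : x ⟶ y) :
    secLift p hp hb e y = secLift p hp hb e x ≫ secMap p hp hb e u :=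
  (secMap_exists p hp hb e u).exists.choose_spec.2

noncomputable def secFunctor : B ⥤ E where
  obj := secObj p hp hb e
  map := secMap p hp hb e
  map_id x := cocart_hom_ext (secLift_cocart p hp hb e x)
    (by rw [secMap_over]; simp) (by rw [← secMap_fac]; simp)
  map_comp {x y z} u v := cocart_hom_ext (secLift_cocart p hp hb e x)
    (by rw [secMap_over, p.map_comp, secMap_over, secMap_over]; simp)
    (by rw [← secMap_fac, ← Category.assoc, ← secMap_fac, ← secMap_fac])

noncomputable def secSection : CocartSection p where
  σ := secFunctor p hp hb e
  sec := CategoryTheory.Functor.ext (secObj_over p hp hb e) (fun x y u => by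
    have h := secMap_over p hp hb e u
    simp only [Functor.comp_map, Functor.id_map, secFunctor]
    rw [h])
  cocart {x y} u := by
    have hfg : (eqToHom e.2 ≫ hb.to y) ≫ eqToHom (secObj_over p hp hb e y).symm =
        ((eqToHom e.2 ≫ hb.to x) ≫ eqToHom (secObj_over p hp hb e x).symm) ≫
          (eqToHom (secObj_over p hp hb e x) ≫ u ≫ eqToHom (secObj_over p hp hb e y).symm) := by
      rw [hb.hom_ext (hb.to y) (hb.to x ≫ u)]; simp
    have hc := secLift_cocart p hp hb e y
    rw [hfg, secMap_fac p hp hb e u] at hc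
    exact cocart_cancel (secLift_cocart p hp hb e x) hc (secMap_over p hp hb e u)

end SecConstruction

/-- If `b` is initial in `B` and `p` is a Grothendieck opfibration, evaluation at `b` is an
equivalence between the category of cocartesian sections of `p` and the fiber of `p` over
`b`. -/
theorem evalAt_isEquivalence_of_initial (p : E ⥤ B) (hp : IsOpfibration p)
    (b : B) (hb : Limits.IsInitial b) : (evalAt p b).IsEquivalence := by
  have hbb : hb.to b = 𝟙 b := hb.hom_ext _ _
  -- key existence/uniqueness of components of transformations
  have hx : ∀ (S T : CocartSection p) (f : S.σ.obj b ⟶ T.σ.obj b),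
      p.map f = eqToHom ((Functor.congr_obj S.sec b).trans (Functor.congr_obj T.sec b).symm) →
      ∀ x : B, ∃! ψ : S.σ.obj x ⟶ T.σ.obj x,
        p.map ψ = eqToHom ((Functor.congr_obj S.sec x).trans (Functor.congr_obj T.sec x).symm) ∧
        f ≫ T.σ.map (hb.to x) = S.σ.map (hb.to x) ≫ ψ := by
    intro S T f hf x
    refine (S.cocart (hb.to x)).2 _ (f ≫ T.σ.map (hb.to x)) ?_
    rw [p.map_comp, hf, (T.cocart (hb.to x)).1]
    simp
  refine { faithful := ?_, full := ?_, essSurj := ?_ }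
  · refine ⟨fun {S T} η η' h => ?_⟩
    have hb' : η.1.app b = η'.1.app b := congrArg Subtype.val h
    apply Subtype.ext; apply NatTrans.ext; funext x
    refine cocart_hom_ext (S.cocart (hb.to x)) (by rw [η.2 x, η'.2 x]) ?_
    rw [η.1.naturality, η'.1.naturality, hb']
  · refine ⟨fun {S T} f => ?_⟩
    have happ := fun x => (hx S T f.1 f.2 x).exists
    choose app happ₁ happ₂ using happ
    have nat : ∀ {x y : B} (u : x ⟶ y), S.σ.map u ≫ app y = app x ≫ T.σ.map u := by
      intro x y u
      refine cocart_hom_ext (S.cocart (hb.to x)) ?_ ?_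
      · rw [p.map_comp, p.map_comp, happ₁ y, happ₁ x, (S.cocart u).1, (T.cocart u).1]
        simp
      · rw [← Category.assoc, ← S.σ.map_comp, hb.hom_ext (hb.to x ≫ u) (hb.to y),
          ← happ₂ y, ← Category.assoc, ← happ₂ x]
        erw [Category.assoc, ← T.σ.map_comp,
          hb.hom_ext (hb.to x ≫ u) (hb.to y)]
    refine ⟨⟨⟨app, fun {x y} u => nat u⟩, fun x => happ₁ x⟩, ?_⟩
    apply Subtype.ext
    show app b = f.1
    have h2 := happ₂ b
    rw [hbb, S.σ.map_id, T.σ.map_id] at h2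
    erw [Category.comp_id, Category.id_comp] at h2
    exact h2.symm
  · refine ⟨fun e => ⟨secSection p hp hb e, ⟨?_⟩⟩⟩
    have hex := (secLift_cocart p hp hb e b).2
      (eqToHom (secObj_over p hp hb e b) ≫ eqToHom e.2.symm) (𝟙 e.1) (by rw [hbb]; simp)
    have hψ₁ := hex.exists.choose_spec.1
    have hψ₂ := hex.exists.choose_spec.2
    set ψ := hex.exists.choose with hψdef
    have hinv : ψ ≫ secLift p hp hb e b = 𝟙 _ := by
      refine cocart_hom_ext (secLift_cocart p hp hb e b) ?_ ?_
      · rw [p.map_comp, hψ₁, (secLift_cocart p hp hb e b).1, hbb]; simp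
      · rw [← Category.assoc, ← hψ₂]; simp
    refine ⟨⟨ψ, by erw [hψ₁]; simp; rfl⟩, ⟨secLift p hp hb e b,
      by erw [(secLift_cocart p hp hb e b).1, hbb]; simp; rfl⟩, ?_, ?_⟩
    · apply Subtype.ext; exact hinv
    · apply Subtype.ext; exact hψ₂.symm
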